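/- The function z ↦ Hω(z) = ∫ 1/(y-z) dω(y) is strictly increasing on each removed open middle-third interval G_j^k, tends to -∞ at the left endpoint and +∞ at the right endpoint, and hence has a unique zero z_j^k in G_j^k. -/

import Mathlib

open MeasureTheory Set Filter
open scoped ENNReal Topology

/-- Left endpoint of the `j`-th closed interval (0 ≤ j < 2^k) of generation `k`
in the middle-thirds Cantor construction on `[0,1]`. -/
noncomputable def cantorLeft : ℕ → ℕ → ℝ
  | 0, _ => 0
  | (k + 1), j => cantorLeft k (j / 2) + if j % 2 = 1 then 2 / 3 ^ (k + 1) else 0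

/-- The removed open middle third `G_j^k` of the generation-`k` Cantor interval `I_j^k`. -/
noncomputable def cantorGap (k j : ℕ) : Set ℝ :=
  Ioo (cantorLeft k j + (1 / 3) ^ (k + 1)) (cantorLeft k j + 2 * (1 / 3) ^ (k + 1))

lemma cL_even (k j : ℕ) : cantorLeft (k+1) (2*j) = cantorLeft k j := by
  simp [cantorLeft, Nat.mul_div_cancel_left, Nat.mul_mod_right]

lemma cL_odd (k j : ℕ) : cantorLeft (k+1) (2*j+1) = cantorLeft k j + 2 / 3 ^ (k+1) := by
  have h1 : (2*j+1) / 2 = j := by omega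
  have h2 : (2*j+1) % 2 = 1 := by omega
  simp [cantorLeft, h1, h2]

lemma cL_bounds : ∀ k j : ℕ, j < 2 ^ k → 0 ≤ cantorLeft k j ∧ cantorLeft k j + (1/3:ℝ) ^ k ≤ 1 := by
  intro k
  induction k with
  | zero => intro j hj; simp [cantorLeft]
  | succ k ih =>
    intro j hj
    have hj2 : j / 2 < 2 ^ k := by omega
    obtain ⟨h0, h1⟩ := ih (j/2) hj2
    have hpow : (0:ℝ) < (1/3) ^ (k+1) := by positivity
    have hpow3 : ((1:ℝ)/3) ^ (k+1) = 1 / 3 ^ (k+1) := by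
      rw [div_pow]; norm_num
    constructor
    · simp only [cantorLeft]
      split <;> positivity
    · simp only [cantorLeft]
      have key : (if j % 2 = 1 then (2:ℝ) / 3 ^ (k + 1) else 0) ≤ 2 / 3 ^ (k+1) := by
        split
        · exact le_refl _
        · positivity
      have : (2:ℝ) / 3^(k+1) + (1/3)^(k+1) = (1/3)^k := by
        rw [one_div_pow, one_div_pow, pow_succ]; field_simp; norm_num
      nlinarith [h1, key]

lemma cL_succ : ∀ k j : ℕ, j < 2 ^ k →
    cantorLeft (k+1) j = cantorLeft k j / 3 ∧
    cantorLeft (k+1) (2^k + j) = (cantorLeft k j + 2) / 3 := by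
  intro k
  induction k with
  | zero =>
    intro j hj
    interval_cases j
    constructor
    · simp [cantorLeft]
    · norm_num [cantorLeft]
  | succ k ih =>
    intro j hj
    have hj2 : j / 2 < 2 ^ k := by omega
    obtain ⟨ih1, ih2⟩ := ih (j/2) hj2
    constructor
    · show cantorLeft (k+1) (j/2) + _ = _
      rw [ih1]
      show cantorLeft k (j/2) / 3 + (if j % 2 = 1 then (2:ℝ) / 3^(k+2) else 0)
        = (cantorLeft k (j/2) + if j % 2 = 1 then (2:ℝ)/3^(k+1) else 0) / 3
      split <;> [skip; ring]
      field_simp; ring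
    · have hdiv : (2^(k+1) + j) / 2 = 2^k + j/2 := by omega
      have hmod : (2^(k+1) + j) % 2 = j % 2 := by omega
      show cantorLeft (k+1) ((2^(k+1)+j)/2) + (if (2^(k+1)+j) % 2 = 1 then (2:ℝ)/3^(k+2) else 0) = _
      rw [hdiv, hmod, ih2]
      show (cantorLeft k (j/2) + 2) / 3 + (if j % 2 = 1 then (2:ℝ)/3^(k+2) else 0)
        = ((cantorLeft k (j/2) + if j % 2 = 1 then (2:ℝ)/3^(k+1) else 0) + 2) / 3
      split <;> [skip; ring]
      field_simp; ring

lemma pre_third (p q : ℝ) : (fun x : ℝ => x/3) ⁻¹' Icc p q = Icc (3*p) (3*q) := by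
  ext x
  simp only [mem_preimage, mem_Icc]
  constructor <;> intro ⟨h1, h2⟩ <;> constructor <;> linarith

lemma pre_third2 (p q : ℝ) : (fun x : ℝ => (x+2)/3) ⁻¹' Icc p q = Icc (3*p-2) (3*q-2) := by
  ext x
  simp only [mem_preimage, mem_Icc]
  constructor <;> intro ⟨h1, h2⟩ <;> constructor <;> linarith

lemma omega_split (ω : Measure ℝ)
    (hself : ω = (1 / 2 : ℝ≥0∞) • ω.map (fun x => x / 3)
      + (1 / 2 : ℝ≥0∞) • ω.map (fun x => (x + 2) / 3))
    (S : Set ℝ) (hS : MeasurableSet S) :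
    ω S = (1/2 : ℝ≥0∞) * ω ((fun x : ℝ => x/3) ⁻¹' S)
        + (1/2 : ℝ≥0∞) * ω ((fun x : ℝ => (x+2)/3) ⁻¹' S) := by
  conv_lhs => rw [hself]
  have h1 : Measurable (fun x : ℝ => x/3) := measurable_id.div_const 3
  have h2 : Measurable (fun x : ℝ => (x+2)/3) := (measurable_id.add_const 2).div_const 3
  rw [Measure.add_apply, Measure.smul_apply, Measure.smul_apply,
    Measure.map_apply h1 hS, Measure.map_apply h2 hS]
  rfl

lemma omega_Icc01 (ω : Measure ℝ) [IsProbabilityMeasure ω]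
    (hsupp : ω (Icc (0 : ℝ) 1)ᶜ = 0) : ω (Icc (0:ℝ) 1) = 1 := by
  have h1 : (1 : ℝ≥0∞) = ω univ := (measure_univ).symm
  have h2 : ω univ ≤ ω (Icc (0:ℝ) 1) + ω (Icc (0:ℝ) 1)ᶜ := by
    rw [← union_compl_self (Icc (0:ℝ) 1)]
    exact measure_union_le _ _
  have h3 : ω (Icc (0:ℝ) 1) ≤ 1 := prob_le_one
  rw [hsupp, add_zero] at h2
  rw [← h1] at h2
  exact le_antisymm h3 h2

lemma omega_mass (ω : Measure ℝ) [IsProbabilityMeasure ω]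
    (hsupp : ω (Icc (0 : ℝ) 1)ᶜ = 0)
    (hself : ω = (1 / 2 : ℝ≥0∞) • ω.map (fun x => x / 3)
      + (1 / 2 : ℝ≥0∞) • ω.map (fun x => (x + 2) / 3)) :
    ∀ k : ℕ, ∀ j < 2^k,
      ω (Icc (cantorLeft k j) (cantorLeft k j + (1/3:ℝ)^k)) = (1/2 : ℝ≥0∞)^k := by
  intro k
  induction k with
  | zero =>
    intro j hj
    simpa [cantorLeft] using omega_Icc01 ω hsupp
  | succ k ih =>
    intro j hj
    rcases lt_or_ge j (2^k) with hjk | hjk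
    · -- left half
      have hc := (cL_succ k j hjk).1
      set c := cantorLeft k j with hcdef
      rw [hc]
      rw [omega_split ω hself _ measurableSet_Icc, pre_third, pre_third2]
      have e1 : 3 * (c/3) = c := by ring
      have e2 : 3 * (c/3 + (1/3:ℝ)^(k+1)) = c + (1/3:ℝ)^k := by
        rw [pow_succ]; ring
      rw [e1, e2]
      have hzero : ω (Icc (c - 2) (c + (1/3:ℝ)^k - 2)) = 0 := by
        apply measure_mono_null _ hsupp
        intro x hx
        simp only [mem_Icc] at hx
        have hub := (cL_bounds k j hjk).2
        simp only [mem_compl_iff, mem_Icc, not_and_or, not_le]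
        left
        linarith [hx.2]
      rw [hzero, ih j hjk]
      rw [mul_zero, add_zero, pow_succ, mul_comm]
    · -- right half
      set i := j - 2^k with hidef
      have hi : i < 2^k := by omega
      have hji : j = 2^k + i := by omega
      have hc := (cL_succ k i hi).2
      rw [hji, hc]
      set c := cantorLeft k i with hcdef
      rw [omega_split ω hself _ measurableSet_Icc, pre_third, pre_third2]
      have e1 : 3 * ((c+2)/3) = c + 2 := by ring
      have e2 : 3 * ((c+2)/3 + (1/3:ℝ)^(k+1)) = c + 2 + (1/3:ℝ)^k := by
        rw [pow_succ]; ring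
      have e3 : c + 2 - 2 = c := by ring
      have e4 : c + 2 + (1/3:ℝ)^k - 2 = c + (1/3:ℝ)^k := by ring
      rw [e1, e2, e3, e4]
      have hzero : ω (Icc (c + 2) (c + 2 + (1/3:ℝ)^k)) = 0 := by
        apply measure_mono_null _ hsupp
        intro x hx
        simp only [mem_Icc] at hx
        have hlb := (cL_bounds k i hi).1
        simp only [mem_compl_iff, mem_Icc, not_and_or, not_le]
        right
        linarith [hx.1]
      rw [hzero, ih i hi]
      rw [mul_zero, zero_add, pow_succ, mul_comm]

lemma omega_gap_zero (ω : Measure ℝ) [IsProbabilityMeasure ω]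
    (hsupp : ω (Icc (0 : ℝ) 1)ᶜ = 0)
    (hself : ω = (1 / 2 : ℝ≥0∞) • ω.map (fun x => x / 3)
      + (1 / 2 : ℝ≥0∞) • ω.map (fun x => (x + 2) / 3)) :
    ∀ k j : ℕ, j < 2^k → ω (cantorGap k j) = 0 := by
  intro k j hj
  set c := cantorLeft k j with hcdef
  set e : ℝ := (1/3)^(k+1) with hedef
  have he : (0:ℝ) < e := by positivity
  have h3e : 3 * e = (1/3:ℝ)^k := by rw [hedef, pow_succ]; ring
  set A : Set ℝ := Icc c (c + e) with hA
  set B : Set ℝ := Ioo (c + e) (c + 2*e) with hB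
  set C : Set ℝ := Icc (c + 2*e) (c + 3*e) with hC
  have hBgap : cantorGap k j = B := rfl
  have hmA : ω A = (1/2:ℝ≥0∞)^(k+1) := by
    have h2j : 2*j < 2^(k+1) := by omega
    have := omega_mass ω hsupp hself (k+1) (2*j) h2j
    rwa [cL_even] at this
  have hmC : ω C = (1/2:ℝ≥0∞)^(k+1) := by
    have h2j : 2*j+1 < 2^(k+1) := by omega
    have := omega_mass ω hsupp hself (k+1) (2*j+1) h2j
    rw [cL_odd] at this
    have : ω (Icc (c + 2/3^(k+1)) (c + 2/3^(k+1) + (1/3:ℝ)^(k+1))) = (1/2:ℝ≥0∞)^(k+1) := this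
    have heq : (2:ℝ)/3^(k+1) = 2*e := by rw [hedef, div_pow]; norm_num; ring
    rw [heq] at this
    have heq2 : c + 2*e + e = c + 3*e := by ring
    rwa [heq2] at this
  have hdisj1 : Disjoint A B := by
    rw [Set.disjoint_left]
    intro x hx hx'
    exact absurd hx'.1 (not_lt.2 hx.2)
  have hdisj2 : Disjoint (A ∪ B) C := by
    rw [Set.disjoint_left]
    intro x hx hx'
    rcases hx with h | h
    · have := h.2; have := hx'.1; linarith
    · have := h.2; have := hx'.1; linarith
  have hU : ω (A ∪ B ∪ C) = ω A + ω B + ω C := by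
    rw [measure_union hdisj2 measurableSet_Icc,
        measure_union hdisj1 (measurableSet_Ioo)]
  have hsub : A ∪ B ∪ C ⊆ Icc c (c + (1/3:ℝ)^k) := by
    rw [← h3e]
    intro x hx
    rcases hx with (h | h) | h <;> simp only [mem_Icc, mem_Ioo, hA, hB, hC] at h ⊢ <;>
      constructor <;> linarith [h.1, h.2]
  have hle : ω A + ω B + ω C ≤ (1/2:ℝ≥0∞)^k := by
    rw [← hU, ← omega_mass ω hsupp hself k j hj]
    exact measure_mono hsub
  rw [hmA, hmC] at hle
  have hk : (1/2:ℝ≥0∞)^k = (1/2:ℝ≥0∞)^(k+1) + (1/2:ℝ≥0∞)^(k+1) := by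
    rw [pow_succ, ← mul_add, ENNReal.add_halves, mul_one]
  rw [hk] at hle
  have hp : (1/2:ℝ≥0∞)^(k+1) ≠ ⊤ := by
    apply ENNReal.pow_ne_top; simp
  rw [add_assoc, ENNReal.add_le_add_iff_left hp] at hle
  have : ω B + (1/2:ℝ≥0∞)^(k+1) ≤ 0 + (1/2:ℝ≥0∞)^(k+1) := by
    rwa [zero_add]
  rw [ENNReal.add_le_add_iff_right hp] at this
  rw [hBgap]
  exact le_antisymm this zero_le

lemma left_endpoint_index (k j : ℕ) (hj : j < 2^k) :
    ∀ m : ℕ, ∃ i < 2^(k+1+m),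
      cantorLeft (k+1+m) i + (1/3:ℝ)^(k+1+m) = cantorLeft k j + (1/3:ℝ)^(k+1) := by
  intro m
  induction m with
  | zero =>
    have h : (2:ℕ)^(k+1+0) = 2*2^k := by ring
    exact ⟨2*j, by omega, by rw [cL_even]⟩
  | succ m ih =>
    obtain ⟨i, hi, heq⟩ := ih
    have h : (2:ℕ)^(k+1+(m+1)) = 2*2^(k+1+m) := by ring
    refine ⟨2*i+1, by omega, ?_⟩
    have : k+1+(m+1) = (k+1+m)+1 := by ring
    rw [this, cL_odd]
    have h1 : (2:ℝ)/3^(k+1+m+1) + (1/3:ℝ)^(k+1+m+1) = (1/3:ℝ)^(k+1+m) := by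
      rw [one_div_pow, one_div_pow, pow_succ]; field_simp; norm_num
    calc cantorLeft (k+1+m) i + 2/3^(k+1+m+1) + (1/3:ℝ)^(k+1+m+1)
        = cantorLeft (k+1+m) i + (2/3^(k+1+m+1) + (1/3:ℝ)^(k+1+m+1)) := by ring
      _ = cantorLeft (k+1+m) i + (1/3:ℝ)^(k+1+m) := by rw [h1]
      _ = cantorLeft k j + (1/3:ℝ)^(k+1) := heq

lemma right_endpoint_index (k j : ℕ) (hj : j < 2^k) :
    ∀ m : ℕ, ∃ i < 2^(k+1+m),
      cantorLeft (k+1+m) i = cantorLeft k j + 2*(1/3:ℝ)^(k+1) := by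
  intro m
  induction m with
  | zero =>
    have h : (2:ℕ)^(k+1+0) = 2*2^k := by ring
    refine ⟨2*j+1, by omega, ?_⟩
    rw [cL_odd]
    congr 1
    rw [div_pow]; norm_num; ring
  | succ m ih =>
    obtain ⟨i, hi, heq⟩ := ih
    have h : (2:ℕ)^(k+1+(m+1)) = 2*2^(k+1+m) := by ring
    refine ⟨2*i, by omega, ?_⟩
    have : k+1+(m+1) = (k+1+m)+1 := by ring
    rw [this, cL_even, heq]

section Analytic

variable {ω : Measure ℝ} [IsProbabilityMeasure ω] {a b : ℝ}

lemma ae_out (hgap : ω (Ioo a b) = 0) : ∀ᵐ y ∂ω, y ∉ Ioo a b :=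
  measure_eq_zero_iff_ae_notMem.1 hgap

lemma integrable_inv_sub (hgap : ω (Ioo a b) = 0) {z : ℝ} (hz : z ∈ Ioo a b) :
    Integrable (fun y => (y - z)⁻¹) ω := by
  obtain ⟨hza, hzb⟩ := hz
  set m := min (z - a) (b - z) with hm
  have hm0 : 0 < m := lt_min (by linarith) (by linarith)
  apply Integrable.mono' (integrable_const m⁻¹)
    ((measurable_id.sub_const z).inv.aestronglyMeasurable)
  filter_upwards [ae_out hgap] with y hy
  rw [Real.norm_eq_abs, Pi.inv_apply, abs_inv]
  apply inv_anti₀ hm0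
  simp only [mem_Ioo, not_and_or, not_lt, id] at hy ⊢
  rcases hy with hy | hy
  · rw [abs_of_neg (by linarith : y - z < 0)]
    exact le_trans (min_le_left _ _) (by linarith)
  · rw [abs_of_pos (by linarith : 0 < y - z)]
    exact le_trans (min_le_right _ _) (by linarith)

lemma H_strictMono (hgap : ω (Ioo a b) = 0) :
    StrictMonoOn (fun z => ∫ y, (y - z)⁻¹ ∂ω) (Ioo a b) := by
  intro z hz z' hz' hlt
  have hi := integrable_inv_sub hgap hz
  have hi' := integrable_inv_sub hgap hz'
  set g := fun y => (y - z')⁻¹ - (y - z)⁻¹ with hg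
  have hgint : Integrable g ω := hi'.sub hi
  have hae : ∀ᵐ y ∂ω, 0 < g y := by
    filter_upwards [ae_out hgap] with y hy
    simp only [mem_Ioo, not_and_or, not_lt] at hy
    have hz1 : a < z := hz.1
    have hz2 : z' < b := hz'.2
    rcases hy with hy | hy
    · have h1 : y - z < 0 := by linarith
      have h2 : y - z' < 0 := by linarith
      have heq : g y = (z' - z) / ((y - z') * (y - z)) := by
        show (y - z')⁻¹ - (y - z)⁻¹ = _
        rw [inv_sub_inv h2.ne h1.ne]
        congr 1
        ring
      rw [heq]
      exact div_pos (by linarith) (mul_pos_of_neg_of_neg h2 h1)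
    · have h1 : 0 < y - z := by linarith
      have h2 : 0 < y - z' := by linarith
      have heq : g y = (z' - z) / ((y - z') * (y - z)) := by
        show (y - z')⁻¹ - (y - z)⁻¹ = _
        rw [inv_sub_inv h2.ne' h1.ne']
        congr 1
        ring
      rw [heq]
      exact div_pos (by linarith) (mul_pos h2 h1)
  have hpos : 0 < ∫ y, g y ∂ω := by
    rw [integral_pos_iff_support_of_nonneg_ae (hae.mono fun y hy => hy.le) hgint]
    have hsupp' : ∀ᵐ y ∂ω, y ∈ Function.support g := hae.mono fun y hy => ne_of_gt hy
    have hcompl : ω (Function.support g)ᶜ = 0 := by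
      simpa [Set.compl_def] using ae_iff.1 hsupp'
    have h1le : (1:ℝ≥0∞) ≤ ω (Function.support g) := by
      have h := measure_union_le (μ := ω) (Function.support g) (Function.support g)ᶜ
      rw [union_compl_self, measure_univ, hcompl, add_zero] at h
      exact h
    exact lt_of_lt_of_le (by norm_num) h1le
  simp only []
  have hsub : (∫ y, (y - z')⁻¹ ∂ω) - ∫ y, (y - z)⁻¹ ∂ω = ∫ y, g y ∂ω := (integral_sub hi' hi).symm
  linarith [hpos, hsub]

lemma H_tendsto_atBot (hab : a < b) (hgap : ω (Ioo a b) = 0)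
    (hmass : ∀ M : ℝ, ∃ δ > 0, M ≤ (ω (Icc (a-δ) a)).toReal / (2*δ)) :
    Tendsto (fun z => ∫ y, (y - z)⁻¹ ∂ω) (𝓝[Ioo a b] a) atBot := by
  rw [tendsto_atBot]
  intro M
  set K : ℝ := 2/(b-a) with hKdef
  have hba : (0:ℝ) < b - a := by linarith
  have hK : 0 < K := by positivity
  obtain ⟨δ, hδ, hge⟩ := hmass (K - M)
  set c : ℝ := (ω (Icc (a-δ) a)).toReal with hcdef
  have hc0 : 0 ≤ c := ENNReal.toReal_nonneg
  have hlt : a < a + min δ ((b-a)/2) := by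
    have : 0 < min δ ((b-a)/2) := lt_min hδ (by linarith)
    linarith
  filter_upwards [eventually_mem_nhdsWithin,
    (eventually_lt_nhds hlt).filter_mono nhdsWithin_le_nhds] with z hzG hzlt
  obtain ⟨hza, hzb⟩ := hzG
  have hzd : z - a ≤ δ := by
    have := min_le_left δ ((b-a)/2)
    linarith
  have hzmid : (b-a)/2 ≤ b - z := by
    have := min_le_right δ ((b-a)/2)
    linarith
  set cz : ℝ := (z - a + δ)⁻¹ with hczdef
  set φ : ℝ → ℝ := fun y =>
    indicator (Ici b) (fun _ => K) y + indicator (Icc (a-δ) a) (fun _ => -cz) y with hφdef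
  have hφint : Integrable φ ω :=
    ((integrable_const K).indicator measurableSet_Ici).add
      ((integrable_const (-cz)).indicator measurableSet_Icc)
  have hzad : 0 < z - a + δ := by linarith
  have hle : ∀ᵐ y ∂ω, (y - z)⁻¹ ≤ φ y := by
    filter_upwards [ae_out hgap] with y hy
    simp only [mem_Ioo, not_and_or, not_lt] at hy
    rcases hy with hy | hy
    · -- y ≤ a
      have hnb : y ∉ Ici b := by simp only [mem_Ici, not_le]; linarith
      rcases le_or_gt (a - δ) y with h1 | h1
      · have hmem : y ∈ Icc (a-δ) a := ⟨h1, hy⟩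
        have : φ y = -cz := by
          simp [hφdef, indicator_of_notMem hnb, indicator_of_mem hmem]
        rw [this]
        have hzy : 0 < z - y := by linarith
        have h2 : (z - a + δ)⁻¹ ≤ (z - y)⁻¹ := inv_anti₀ hzy (by linarith)
        have h3 : y - z = -(z - y) := by ring
        rw [h3, inv_neg]
        linarith
      · have hnmem : y ∉ Icc (a-δ) a := by
          simp only [mem_Icc, not_and_or, not_le]; left; linarith
        have : φ y = 0 := by
          simp [hφdef, indicator_of_notMem hnb, indicator_of_notMem hnmem]
        rw [this]
        exact inv_nonpos.2 (by linarith)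
    · -- b ≤ y
      have hmb : y ∈ Ici b := hy
      have hnmem : y ∉ Icc (a-δ) a := by
        simp only [mem_Icc, not_and_or, not_le]; right; linarith
      have : φ y = K := by
        simp [hφdef, indicator_of_mem hmb, indicator_of_notMem hnmem]
      rw [this]
      have hbz : 0 < b - z := by linarith
      have h2 : (y - z)⁻¹ ≤ (b - z)⁻¹ := inv_anti₀ hbz (by linarith)
      have h3 : (b - z)⁻¹ ≤ ((b-a)/2)⁻¹ := inv_anti₀ (by linarith) hzmid
      have h4 : ((b-a)/2)⁻¹ = K := by rw [hKdef]; field_simp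
      linarith
  have hint : Integrable (fun y => (y - z)⁻¹) ω := integrable_inv_sub hgap ⟨hza, hzb⟩
  have h1 : ∫ y, (y - z)⁻¹ ∂ω ≤ ∫ y, φ y ∂ω := integral_mono_ae hint hφint hle
  have h2 : ∫ y, φ y ∂ω = (ω (Ici b)).toReal * K + c * (-cz) := by
    rw [hφdef]
    rw [integral_add ((integrable_const K).indicator measurableSet_Ici)
      ((integrable_const (-cz)).indicator measurableSet_Icc)]
    rw [integral_indicator_const _ measurableSet_Ici,
      integral_indicator_const _ measurableSet_Icc]
    simp [smul_eq_mul, hcdef, measureReal_def]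
  have hb1 : (ω (Ici b)).toReal ≤ 1 := by
    have h := prob_le_one (μ := ω) (s := Ici b)
    have := ENNReal.toReal_mono ENNReal.one_ne_top h
    simpa using this
  have hb0 : 0 ≤ (ω (Ici b)).toReal := ENNReal.toReal_nonneg
  have h3 : (2*δ)⁻¹ ≤ cz := inv_anti₀ hzad (by linarith)
  have h4 : c/(2*δ) = c * (2*δ)⁻¹ := div_eq_mul_inv _ _
  have h5 : c * (2*δ)⁻¹ ≤ c * cz := mul_le_mul_of_nonneg_left h3 hc0
  have h6 : (ω (Ici b)).toReal * K ≤ K := by nlinarith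
  calc ∫ y, (y - z)⁻¹ ∂ω ≤ (ω (Ici b)).toReal * K + c * (-cz) := by rw [← h2]; exact h1
    _ ≤ K - c * cz := by linarith
    _ ≤ K - (K - M) := by rw [h4] at hge; linarith
    _ = M := by ring

lemma H_tendsto_atTop (hab : a < b) (hgap : ω (Ioo a b) = 0)
    (hmass : ∀ M : ℝ, ∃ δ > 0, M ≤ (ω (Icc b (b+δ))).toReal / (2*δ)) :
    Tendsto (fun z => ∫ y, (y - z)⁻¹ ∂ω) (𝓝[Ioo a b] b) atTop := by
  rw [tendsto_atTop]
  intro M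
  set K : ℝ := 2/(b-a) with hKdef
  have hba : (0:ℝ) < b - a := by linarith
  have hK : 0 < K := by positivity
  obtain ⟨δ, hδ, hge⟩ := hmass (M + K)
  set c : ℝ := (ω (Icc b (b+δ))).toReal with hcdef
  have hc0 : 0 ≤ c := ENNReal.toReal_nonneg
  have hlt : b - min δ ((b-a)/2) < b := by
    have : 0 < min δ ((b-a)/2) := lt_min hδ (by linarith)
    linarith
  have hev : ∀ᶠ z in 𝓝 b, b - min δ ((b-a)/2) < z := eventually_gt_nhds hlt
  filter_upwards [eventually_mem_nhdsWithin,
    hev.filter_mono nhdsWithin_le_nhds] with z hzG hzlt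
  obtain ⟨hza, hzb⟩ := hzG
  have hzd : b - z ≤ δ := by
    have := min_le_left δ ((b-a)/2)
    linarith
  have hzmid : (b-a)/2 ≤ z - a := by
    have := min_le_right δ ((b-a)/2)
    linarith
  set cz : ℝ := (b - z + δ)⁻¹ with hczdef
  set φ : ℝ → ℝ := fun y =>
    indicator (Iic a) (fun _ => -K) y + indicator (Icc b (b+δ)) (fun _ => cz) y with hφdef
  have hφint : Integrable φ ω :=
    ((integrable_const (-K)).indicator measurableSet_Iic).add
      ((integrable_const cz).indicator measurableSet_Icc)
  have hzad : 0 < b - z + δ := by linarith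
  have hle : ∀ᵐ y ∂ω, φ y ≤ (y - z)⁻¹ := by
    filter_upwards [ae_out hgap] with y hy
    simp only [mem_Ioo, not_and_or, not_lt] at hy
    rcases hy with hy | hy
    · -- y ≤ a
      have hma : y ∈ Iic a := hy
      have hnmem : y ∉ Icc b (b+δ) := by
        simp only [mem_Icc, not_and_or, not_le]; left; linarith
      have : φ y = -K := by
        simp [hφdef, indicator_of_mem hma, indicator_of_notMem hnmem]
      rw [this]
      have hzy : 0 < z - y := by linarith
      have h2 : (z - y)⁻¹ ≤ ((b-a)/2)⁻¹ := inv_anti₀ (by linarith) (by linarith)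
      have h4 : ((b-a)/2)⁻¹ = K := by rw [hKdef]; field_simp
      have h3 : y - z = -(z - y) := by ring
      rw [h3, inv_neg]
      linarith
    · -- b ≤ y
      have hna : y ∉ Iic a := by simp only [mem_Iic, not_le]; linarith
      rcases le_or_gt y (b + δ) with h1 | h1
      · have hmem : y ∈ Icc b (b+δ) := ⟨hy, h1⟩
        have : φ y = cz := by
          simp [hφdef, indicator_of_notMem hna, indicator_of_mem hmem]
        rw [this]
        have hyz : 0 < y - z := by linarith
        exact inv_anti₀ hyz (by linarith)
      · have hnmem : y ∉ Icc b (b+δ) := by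
          simp only [mem_Icc, not_and_or, not_le]; right; linarith
        have : φ y = 0 := by
          simp [hφdef, indicator_of_notMem hna, indicator_of_notMem hnmem]
        rw [this]
        exact le_of_lt (inv_pos.2 (by linarith))
  have hint : Integrable (fun y => (y - z)⁻¹) ω := integrable_inv_sub hgap ⟨hza, hzb⟩
  have h1 : ∫ y, φ y ∂ω ≤ ∫ y, (y - z)⁻¹ ∂ω := integral_mono_ae hφint hint hle
  have h2 : ∫ y, φ y ∂ω = (ω (Iic a)).toReal * (-K) + c * cz := by
    rw [hφdef]
    rw [integral_add ((integrable_const (-K)).indicator measurableSet_Iic)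
      ((integrable_const cz).indicator measurableSet_Icc)]
    rw [integral_indicator_const _ measurableSet_Iic,
      integral_indicator_const _ measurableSet_Icc]
    simp [smul_eq_mul, hcdef, measureReal_def]
  have hb1 : (ω (Iic a)).toReal ≤ 1 := by
    have h := prob_le_one (μ := ω) (s := Iic a)
    have := ENNReal.toReal_mono ENNReal.one_ne_top h
    simpa using this
  have hb0 : 0 ≤ (ω (Iic a)).toReal := ENNReal.toReal_nonneg
  have h3 : (2*δ)⁻¹ ≤ cz := inv_anti₀ hzad (by linarith)
  have h4 : c/(2*δ) = c * (2*δ)⁻¹ := div_eq_mul_inv _ _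
  have h5 : c * (2*δ)⁻¹ ≤ c * cz := mul_le_mul_of_nonneg_left h3 hc0
  have h6 : -K ≤ (ω (Iic a)).toReal * (-K) := by nlinarith
  calc M = (M + K) - K := by ring
    _ ≤ c * cz - K := by rw [h4] at hge; linarith
    _ ≤ (ω (Iic a)).toReal * (-K) + c * cz := by linarith
    _ ≤ ∫ y, (y - z)⁻¹ ∂ω := by rw [← h2]; exact h1

lemma H_continuousAt (hgap : ω (Ioo a b) = 0) {z₀ : ℝ} (hz₀ : z₀ ∈ Ioo a b) :
    ContinuousAt (fun z => ∫ y, (y - z)⁻¹ ∂ω) z₀ := by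
  obtain ⟨hza, hzb⟩ := hz₀
  set r : ℝ := min (z₀ - a) (b - z₀) with hrdef
  have hr : 0 < r := lt_min (by linarith) (by linarith)
  apply MeasureTheory.continuousAt_of_dominated (bound := fun _ => (r/2)⁻¹)
  · exact Eventually.of_forall fun z =>
      ((measurable_id.sub_const z).inv.aestronglyMeasurable)
  · have hball : Metric.ball z₀ (r/2) ∈ 𝓝 z₀ := Metric.ball_mem_nhds _ (by positivity)
    filter_upwards [hball] with z hz
    rw [Metric.mem_ball, Real.dist_eq] at hz
    have habs := abs_lt.1 hz
    filter_upwards [ae_out hgap] with y hy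
    simp only [mem_Ioo, not_and_or, not_lt] at hy
    rw [Real.norm_eq_abs, abs_inv]
    apply inv_anti₀ (by positivity)
    have hr1 : r ≤ z₀ - a := min_le_left _ _
    have hr2 : r ≤ b - z₀ := min_le_right _ _
    rcases hy with hy | hy
    · rw [abs_of_neg (by linarith : y - z < 0)]
      linarith
    · rw [abs_of_pos (by linarith : 0 < y - z)]
      linarith
  · exact integrable_const _
  · filter_upwards [ae_out hgap] with y hy
    simp only [mem_Ioo, not_and_or, not_lt] at hy
    have hne : y - z₀ ≠ 0 := by
      rcases hy with hy | hy
      · exact ne_of_lt (by linarith)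
      · exact ne_of_gt (by linarith)
    exact ((continuous_const.sub continuous_id).continuousAt).inv₀ hne

end Analytic

lemma toReal_half_pow (n : ℕ) : ((1/2 : ℝ≥0∞)^n).toReal = (1/2:ℝ)^n := by
  rw [ENNReal.toReal_pow]
  norm_num

lemma ratio_large (M : ℝ) (k : ℕ) : ∃ m : ℕ,
    M ≤ (1/2:ℝ)^(k+1+m) / (2*(1/3:ℝ)^(k+1+m)) := by
  obtain ⟨n₀, hn₀⟩ := pow_unbounded_of_one_lt (2*M) (by norm_num : (1:ℝ) < 3/2)
  refine ⟨n₀, ?_⟩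
  set n := k+1+n₀ with hn
  have hmono : (3/2:ℝ)^n₀ ≤ (3/2:ℝ)^n :=
    pow_le_pow_right₀ (by norm_num) (by omega)
  have hkey : (1/2:ℝ)^n / (2*(1/3:ℝ)^n) = (3/2:ℝ)^n / 2 := by
    have h3 : (0:ℝ) < (1/3:ℝ)^n := by positivity
    rw [div_eq_div_iff (by positivity : 2*(1/3:ℝ)^n ≠ 0) (by norm_num : (2:ℝ) ≠ 0)]
    have h5 : (3/2:ℝ)^n * (2 * (1/3:ℝ)^n) = 2 * ((3/2:ℝ) * (1/3:ℝ))^n := by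
      rw [mul_pow]; ring
    rw [h5]
    norm_num
    rw [mul_comm]
  rw [hkey]
  linarith

lemma left_mass_ratio (ω : Measure ℝ) [IsProbabilityMeasure ω]
    (hsupp : ω (Icc (0 : ℝ) 1)ᶜ = 0)
    (hself : ω = (1 / 2 : ℝ≥0∞) • ω.map (fun x => x / 3)
      + (1 / 2 : ℝ≥0∞) • ω.map (fun x => (x + 2) / 3))
    (k j : ℕ) (hj : j < 2^k) :
    ∀ M : ℝ, ∃ δ > 0, M ≤ (ω (Icc (cantorLeft k j + (1/3:ℝ)^(k+1) - δ)
      (cantorLeft k j + (1/3:ℝ)^(k+1)))).toReal / (2*δ) := by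
  intro M
  obtain ⟨m, hm⟩ := ratio_large M k
  obtain ⟨i, hi, heq⟩ := left_endpoint_index k j hj m
  set n := k+1+m with hn
  refine ⟨(1/3:ℝ)^n, by positivity, ?_⟩
  have hIcc : Icc (cantorLeft k j + (1/3:ℝ)^(k+1) - (1/3:ℝ)^n)
      (cantorLeft k j + (1/3:ℝ)^(k+1)) = Icc (cantorLeft n i) (cantorLeft n i + (1/3:ℝ)^n) := by
    rw [← heq]
    congr 1
    ring
  rw [hIcc, omega_mass ω hsupp hself n i hi, toReal_half_pow]
  exact hm

lemma right_mass_ratio (ω : Measure ℝ) [IsProbabilityMeasure ω]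
    (hsupp : ω (Icc (0 : ℝ) 1)ᶜ = 0)
    (hself : ω = (1 / 2 : ℝ≥0∞) • ω.map (fun x => x / 3)
      + (1 / 2 : ℝ≥0∞) • ω.map (fun x => (x + 2) / 3))
    (k j : ℕ) (hj : j < 2^k) :
    ∀ M : ℝ, ∃ δ > 0, M ≤ (ω (Icc (cantorLeft k j + 2*(1/3:ℝ)^(k+1))
      (cantorLeft k j + 2*(1/3:ℝ)^(k+1) + δ))).toReal / (2*δ) := by
  intro M
  obtain ⟨m, hm⟩ := ratio_large M k
  obtain ⟨i, hi, heq⟩ := right_endpoint_index k j hj m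
  set n := k+1+m with hn
  refine ⟨(1/3:ℝ)^n, by positivity, ?_⟩
  have hIcc : Icc (cantorLeft k j + 2*(1/3:ℝ)^(k+1))
      (cantorLeft k j + 2*(1/3:ℝ)^(k+1) + (1/3:ℝ)^n)
      = Icc (cantorLeft n i) (cantorLeft n i + (1/3:ℝ)^n) := by
    rw [← heq]
  rw [hIcc, omega_mass ω hsupp hself n i hi, toReal_half_pow]
  exact hm

/-- The function `z ↦ Hω(z) = ∫ (y - z)⁻¹ dω(y)` is strictly increasing
on each removed open middle third `G_j^k`, tends to `-∞` at the left endpoint and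
to `+∞` at the right endpoint (from within `G_j^k`), and hence has a unique zero
`z_j^k` in `G_j^k`.  Here `ω` is the middle-thirds Cantor measure, characterized as
the self-similar probability measure supported in `[0,1]`. -/
theorem stmt_3 (ω : Measure ℝ) [IsProbabilityMeasure ω]
    (hsupp : ω (Icc (0 : ℝ) 1)ᶜ = 0)
    (hself : ω = (1 / 2 : ℝ≥0∞) • ω.map (fun x => x / 3)
      + (1 / 2 : ℝ≥0∞) • ω.map (fun x => (x + 2) / 3))
    (H : ℝ → ℝ) (hH : ∀ z, H z = ∫ y, (y - z)⁻¹ ∂ω) :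
    ∀ k j : ℕ, j < 2 ^ k →
      StrictMonoOn H (cantorGap k j) ∧
      Tendsto H (𝓝[cantorGap k j] (cantorLeft k j + (1 / 3) ^ (k + 1))) atBot ∧
      Tendsto H (𝓝[cantorGap k j] (cantorLeft k j + 2 * (1 / 3) ^ (k + 1))) atTop ∧
      ∃! z : ℝ, z ∈ cantorGap k j ∧ H z = 0 := by
  have hfun : H = fun z => ∫ y, (y - z)⁻¹ ∂ω := funext hH
  subst hfun
  intro k j hj
  set F : ℝ → ℝ := fun z => ∫ y, (y - z)⁻¹ ∂ω with hF
  set c := cantorLeft k j with hcdef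
  set a := c + (1/3:ℝ)^(k+1) with hadef
  set b := c + 2*(1/3:ℝ)^(k+1) with hbdef
  have hpow : (0:ℝ) < (1/3:ℝ)^(k+1) := by positivity
  have hab : a < b := by rw [hadef, hbdef]; linarith
  have hgapeq : cantorGap k j = Ioo a b := rfl
  have hgap : ω (Ioo a b) = 0 := by
    rw [← hgapeq]; exact omega_gap_zero ω hsupp hself k j hj
  have hmassL := left_mass_ratio ω hsupp hself k j hj
  have hmassR := right_mass_ratio ω hsupp hself k j hj
  have hmono := H_strictMono (ω := ω) (a := a) (b := b) hgap
  have hbot : Tendsto F (𝓝[Ioo a b] a) atBot :=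
    H_tendsto_atBot hab hgap (by exact hmassL)
  have htop : Tendsto F (𝓝[Ioo a b] b) atTop :=
    H_tendsto_atTop hab hgap (by exact hmassR)
  refine ⟨by rw [hgapeq]; exact hmono, by rw [hgapeq]; exact hbot,
    by rw [hgapeq]; exact htop, ?_⟩
  haveI hne1 : (𝓝[Ioo a b] a).NeBot := left_nhdsWithin_Ioo_neBot hab
  haveI hne2 : (𝓝[Ioo a b] b).NeBot := right_nhdsWithin_Ioo_neBot hab
  have h1 : ∀ᶠ z in 𝓝[Ioo a b] a, F z ≤ -1 := hbot.eventually (eventually_le_atBot (-1))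
  have h2 : ∀ᶠ z in 𝓝[Ioo a b] b, 1 ≤ F z := htop.eventually (eventually_ge_atTop 1)
  obtain ⟨z₁, hz₁v, hz₁G⟩ := (h1.and eventually_mem_nhdsWithin).exists
  obtain ⟨z₂, hz₂v, hz₂G⟩ := (h2.and eventually_mem_nhdsWithin).exists
  have hlt : z₁ < z₂ := by
    rcases lt_trichotomy z₁ z₂ with h | h | h
    · exact h
    · rw [h] at hz₁v; linarith
    · have := hmono hz₂G hz₁G h; linarith
  have hsub : Icc z₁ z₂ ⊆ Ioo a b := fun x hx =>
    ⟨lt_of_lt_of_le hz₁G.1 hx.1, lt_of_le_of_lt hx.2 hz₂G.2⟩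
  have hconts : ContinuousOn F (Icc z₁ z₂) := fun x hx =>
    (H_continuousAt hgap (hsub hx)).continuousWithinAt
  have h0mem : (0:ℝ) ∈ Icc (F z₁) (F z₂) := ⟨by linarith, by linarith⟩
  obtain ⟨z₀, hz₀mem, hz₀⟩ := intermediate_value_Icc hlt.le hconts h0mem
  have hz₀G : z₀ ∈ Ioo a b := hsub hz₀mem
  refine ⟨z₀, ⟨by rw [hgapeq]; exact hz₀G, hz₀⟩, ?_⟩
  rintro w ⟨hwG, hw0⟩
  have hwG' : w ∈ Ioo a b := by rw [hgapeq] at hwG; exact hwG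
  rcases lt_trichotomy w z₀ with h | h | h
  · have h' : F w < F z₀ := hmono hwG' hz₀G h
    rw [hw0, hz₀] at h'
    exact absurd h' (lt_irrefl 0)
  · exact h
  · have h' : F z₀ < F w := hmono hz₀G hwG' h
    rw [hw0, hz₀] at h'
    exact absurd h' (lt_irrefl 0)
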